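/- The polynomial map f : ℂ² → ℂ⁴ defined by f(t2, t6) = (t2, −6·t6 − (5/72)·t2³, (7/576)·t2⁴ + (3/2)·t2·t6, −(29/20736)·t2⁶ − (9/2)·t6² − (11/48)·t6·t2³) is injective, and its image equals {(a, c, d, e) ∈ ℂ⁴ : d = −(1/192)·a⁴ − (1/4)·a·c and e = (1/1536)·a⁶ − (1/8)·c² + (1/48)·a³·c}. Hence f is a bijection from ℂ² onto this set. -/
import Mathlib


/-- The base change map of the case D₄−G₂−E₆, in flat coordinates: it is injective
with image cut out by the relations d = −(1/192)a⁴ − (1/4)ac and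
e = (1/1536)a⁶ − (1/8)c² + (1/48)a³c, hence a bijection onto that set. -/
theorem stmt_19 :
    Function.Injective (fun t : ℂ × ℂ =>
      ((t.1, -6 * t.2 - (5/72) * t.1 ^ 3,
        (7/576) * t.1 ^ 4 + (3/2) * t.1 * t.2,
        -(29/20736) * t.1 ^ 6 - (9/2) * t.2 ^ 2 - (11/48) * t.2 * t.1 ^ 3)
          : ℂ × ℂ × ℂ × ℂ)) ∧
    Set.range (fun t : ℂ × ℂ =>
      ((t.1, -6 * t.2 - (5/72) * t.1 ^ 3,
        (7/576) * t.1 ^ 4 + (3/2) * t.1 * t.2,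
        -(29/20736) * t.1 ^ 6 - (9/2) * t.2 ^ 2 - (11/48) * t.2 * t.1 ^ 3)
          : ℂ × ℂ × ℂ × ℂ)) =
      {p : ℂ × ℂ × ℂ × ℂ |
        p.2.2.1 = -(1/192) * p.1 ^ 4 - (1/4) * p.1 * p.2.1 ∧
        p.2.2.2 = (1/1536) * p.1 ^ 6 - (1/8) * p.2.1 ^ 2
          + (1/48) * p.1 ^ 3 * p.2.1} := by
  constructor
  · rintro ⟨a, b⟩ ⟨a', b'⟩ h
    simp only [Prod.mk.injEq] at h
    obtain ⟨h1, h2, -, -⟩ := h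
    subst h1
    refine Prod.ext rfl ?_
    have : (-6 : ℂ) * b = -6 * b' := by linear_combination h2
    simpa using mul_left_cancel₀ (by norm_num : (-6:ℂ) ≠ 0) this
  · ext ⟨a, c, d, e⟩
    simp only [Set.mem_range, Set.mem_setOf_eq, Prod.mk.injEq]
    constructor
    · rintro ⟨⟨t2, t6⟩, h⟩
      simp only [Prod.mk.injEq] at h
      obtain ⟨h1, h2, h3, h4⟩ := h
      subst h1 h2 h3 h4
      constructor <;> ring
    · rintro ⟨hd, he⟩
      refine ⟨(a, -(c + (5/72) * a ^ 3) / 6), rfl, by ring, ?_, ?_⟩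
      · rw [hd]; ring
      · rw [he]; ring
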